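/- Let $d = 3$, $\gamma(x) = C(|x|^{-d+1} + |x|^{-d+2})$, and let $r \in (0,1]$, $T \ge 1$ with $rT \le 1$. Then there is a constant $C' < \infty$, independent of $r$ and $T$, such that $r^{-1-d} \int_{\mathbb{R}^d} \Big( \int_{\mathbb{R}^d} \gamma(x)\,\mathbf{1}\{|x| < T\}\,\mathbf{1}\{|x - z| < 3r\}\, dx \Big)^2 dz \le C' \big(r + r^{d-1} T\big) \le 2 C' r$. -/

import Mathlib

open MeasureTheory Set Metric Real Filter
open scoped ENNReal

noncomputable abbrev E3 := EuclideanSpace ℝ (Fin 3)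

lemma finrankE3 : Module.finrank ℝ E3 = 3 := finrank_euclideanSpace_fin

lemma volE3 : 0 < (volume (ball (0:E3) 1)).toReal :=
  ENNReal.toReal_pos (measure_ball_pos _ _ one_pos).ne' measure_ball_lt_top.ne

lemma intOn_rpow_ball {R : ℝ} (hR : 0 < R) {p : ℝ} (hp : -3 < p) (hp0 : p < 0) :
    IntegrableOn (fun x : E3 => ‖x‖ ^ p) (ball (0:E3) R) := by
  constructor
  · exact (measurable_norm.pow_const p).aestronglyMeasurable
  · have hnn : ∀ x : E3, 0 ≤ ‖x‖ ^ p := fun x => rpow_nonneg (norm_nonneg x) p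
    rw [HasFiniteIntegral,
      lintegral_enorm_of_nonneg (fun x => hnn x),
      lintegral_eq_lintegral_meas_le _ (Eventually.of_forall hnn)
        ((measurable_norm.pow_const p).aemeasurable)]
    set μ' := volume.restrict (ball (0:E3) R) with hμ'
    have key : ∀ t : ℝ, 0 < t →
        {a : E3 | t ≤ ‖a‖ ^ p} ⊆ closedBall (0:E3) (t ^ p⁻¹) := by
      intro t ht a ha
      simp only [mem_setOf_eq] at ha
      have hn : 0 < ‖a‖ := by
        rcases eq_or_lt_of_le (norm_nonneg a) with h | h
        · exfalso
          rw [← h, zero_rpow hp0.ne] at ha; linarith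
        · exact h
      have h2 : (‖a‖ ^ p) ^ p⁻¹ ≤ t ^ p⁻¹ :=
        rpow_le_rpow_of_nonpos ht ha (inv_nonpos.mpr hp0.le)
      rw [mem_closedBall_zero_iff]
      calc ‖a‖ = (‖a‖ ^ p) ^ p⁻¹ := by
              rw [← rpow_mul (norm_nonneg a), mul_inv_cancel₀ hp0.ne, rpow_one]
        _ ≤ t ^ p⁻¹ := h2
    calc ∫⁻ t in Ioi (0:ℝ), μ' {a | t ≤ ‖a‖ ^ p}
        ≤ ∫⁻ t in Ioc (0:ℝ) 1 ∪ Ioi 1, μ' {a | t ≤ ‖a‖ ^ p} :=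
          lintegral_mono_set Ioi_subset_Ioc_union_Ioi
      _ ≤ (∫⁻ t in Ioc (0:ℝ) 1, μ' {a | t ≤ ‖a‖ ^ p})
            + ∫⁻ t in Ioi (1:ℝ), μ' {a | t ≤ ‖a‖ ^ p} := lintegral_union_le _ _ _
      _ < ⊤ := by
        refine ENNReal.add_lt_top.2 ⟨?_, ?_⟩
        · calc (∫⁻ t in Ioc (0:ℝ) 1, μ' {a | t ≤ ‖a‖ ^ p})
              ≤ ∫⁻ _ in Ioc (0:ℝ) 1, volume (ball (0:E3) R) := by
                refine setLIntegral_mono' measurableSet_Ioc fun t _ => ?_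
                exact (measure_mono (subset_univ _)).trans_eq
                  (by rw [hμ', Measure.restrict_apply_univ])
            _ < ⊤ := by
                rw [setLIntegral_const, Real.volume_Ioc]
                exact ENNReal.mul_lt_top measure_ball_lt_top ENNReal.ofReal_lt_top
        · have hpinv : p⁻¹ < 0 := inv_lt_zero.2 hp0
          have h31 : 3 * p⁻¹ < -1 := by
            nlinarith [mul_inv_cancel₀ hp0.ne, hp, hpinv]
          calc (∫⁻ t in Ioi (1:ℝ), μ' {a | t ≤ ‖a‖ ^ p})
              ≤ ∫⁻ t in Ioi (1:ℝ), ENNReal.ofReal (t ^ (3 * p⁻¹))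
                  * volume (ball (0:E3) 1) := by
                refine setLIntegral_mono' measurableSet_Ioi fun t ht => ?_
                have ht0 : (0:ℝ) < t := lt_trans one_pos ht
                refine le_trans (le_trans (Measure.restrict_apply_le _ _)
                  (measure_mono (key t ht0))) ?_
                rw [Measure.addHaar_closedBall volume _ (rpow_nonneg ht0.le _), finrankE3]
                apply le_of_eq
                congr 1
                rw [← rpow_natCast (t ^ p⁻¹) 3, ← rpow_mul ht0.le]
                ring_nf
            _ < ⊤ := by
                rw [lintegral_mul_const' _ _ measure_ball_lt_top.ne]
                refine ENNReal.mul_lt_top ?_ measure_ball_lt_top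
                exact (integrableOn_Ioi_rpow_of_lt h31 one_pos).setLIntegral_lt_top


lemma integral_rpow_ball {R p : ℝ} (hR : 0 < R) (hp3 : -3 < p) (hp0 : p < 0) :
    ∫ x in ball (0:E3) R, ‖x‖ ^ p
      = 3 * (volume (ball (0:E3) 1)).toReal * (R ^ (3+p) / (3+p)) := by
  rw [← integral_indicator measurableSet_ball]
  have heq : ∀ x : E3, (ball (0:E3) R).indicator (fun x => ‖x‖ ^ p) x
      = (Ico (0:ℝ) R).indicator (fun y => y ^ p) ‖x‖ := by
    intro x
    by_cases h : ‖x‖ < R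
    · have h1 : x ∈ ball (0:E3) R := mem_ball_zero_iff.mpr h
      have h2 : ‖x‖ ∈ Ico (0:ℝ) R := ⟨norm_nonneg x, h⟩
      rw [indicator_of_mem h1, indicator_of_mem h2]
    · have h1 : x ∉ ball (0:E3) R := fun hc => h (mem_ball_zero_iff.mp hc)
      have h2 : ‖x‖ ∉ Ico (0:ℝ) R := fun hc => h hc.2
      rw [indicator_of_notMem h1, indicator_of_notMem h2]
  rw [integral_congr_ae (Eventually.of_forall heq)]
  rw [integral_fun_norm_addHaar volume (fun y => (Ico (0:ℝ) R).indicator (fun y => y ^ p) y),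
    finrankE3]
  have : ∀ y : ℝ, y ∈ Ioi (0:ℝ) →
      y ^ (3-1) • (Ico (0:ℝ) R).indicator (fun y => y ^ p) y
        = (Ico (0:ℝ) R).indicator (fun y => y ^ (2+p)) y := by
    intro y hy
    simp only [smul_eq_mul]
    by_cases h : y ∈ Ico (0:ℝ) R
    · rw [indicator_of_mem h, indicator_of_mem h, ← rpow_natCast y (3-1),
        ← rpow_add hy]
      norm_num
    · rw [indicator_of_notMem h, indicator_of_notMem h, mul_zero]
  rw [setIntegral_congr_fun measurableSet_Ioi this,
    setIntegral_indicator measurableSet_Ico]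
  have hIoo : Ioi (0:ℝ) ∩ Ico 0 R = Ioo 0 R := by
    ext y
    simp only [mem_Ioo, mem_Ioi, mem_Ico, mem_inter_iff]
    constructor
    · rintro ⟨h3, _, h2⟩; exact ⟨h3, h2⟩
    · rintro ⟨h1, h2⟩; exact ⟨h1, h1.le, h2⟩
  rw [hIoo, ← integral_Ioc_eq_integral_Ioo,
    ← intervalIntegral.integral_of_le hR.le,
    integral_rpow (Or.inl (by linarith))]
  rw [zero_rpow (by linarith : (2:ℝ)+p+1 ≠ 0)]
  simp only [smul_eq_mul, nsmul_eq_mul, measureReal_def]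
  push_cast
  ring_nf

lemma integral_rpow_annulus {a b p : ℝ} (ha : 0 < a) (hab : a ≤ b) (hp : p + 3 ≠ 0) :
    ∫ x in closedBall (0:E3) b \ ball (0:E3) a, ‖x‖ ^ p
      = 3 * (volume (ball (0:E3) 1)).toReal * ((b ^ (3+p) - a ^ (3+p)) / (3+p)) := by
  rw [← integral_indicator ((measurableSet_closedBall).diff measurableSet_ball)]
  have heq : ∀ x : E3, (closedBall (0:E3) b \ ball (0:E3) a).indicator (fun x => ‖x‖ ^ p) x
      = (Icc a b).indicator (fun y => y ^ p) ‖x‖ := by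
    intro x
    have hmem : x ∈ closedBall (0:E3) b \ ball (0:E3) a ↔ ‖x‖ ∈ Icc a b := by
      simp only [mem_diff, mem_closedBall_zero_iff, mem_ball_zero_iff, not_lt, mem_Icc, and_comm]
    by_cases h : ‖x‖ ∈ Icc a b
    · rw [indicator_of_mem (hmem.mpr h), indicator_of_mem h]
    · rw [indicator_of_notMem (fun hc => h (hmem.mp hc)), indicator_of_notMem h]
  rw [integral_congr_ae (Eventually.of_forall heq)]
  rw [integral_fun_norm_addHaar volume (fun y => (Icc a b).indicator (fun y => y ^ p) y),
    finrankE3]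
  have : ∀ y : ℝ, y ∈ Ioi (0:ℝ) →
      y ^ (3-1) • (Icc a b).indicator (fun y => y ^ p) y
        = (Icc a b).indicator (fun y => y ^ (2+p)) y := by
    intro y hy
    simp only [smul_eq_mul]
    by_cases h : y ∈ Icc a b
    · rw [indicator_of_mem h, indicator_of_mem h, ← rpow_natCast y (3-1), ← rpow_add hy]
      norm_num
    · rw [indicator_of_notMem h, indicator_of_notMem h, mul_zero]
  rw [setIntegral_congr_fun measurableSet_Ioi this,
    setIntegral_indicator measurableSet_Icc]
  have hIcc : Ioi (0:ℝ) ∩ Icc a b = Icc a b := by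
    refine inter_eq_right.mpr fun y hy => ?_
    exact lt_of_lt_of_le ha hy.1
  rw [hIcc, integral_Icc_eq_integral_Ioc, ← intervalIntegral.integral_of_le hab,
    integral_rpow (Or.inr ⟨by intro hc; apply hp; linarith,
      fun hc => absurd hc (by rw [uIcc_of_le hab]; exact fun hc2 => absurd hc2.1 (by linarith)) ⟩)]
  simp only [smul_eq_mul, nsmul_eq_mul, measureReal_def]
  push_cast
  ring_nf

noncomputable def greenKernel (C : ℝ) (x : EuclideanSpace ℝ (Fin 3)) : ℝ :=
  C * (‖x‖ ^ (-(2:ℝ)) + ‖x‖ ^ (-(1:ℝ)))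

lemma gk_nonneg {C : ℝ} (hC : 0 ≤ C) (x : E3) : 0 ≤ greenKernel C x := by
  unfold greenKernel
  have := rpow_nonneg (norm_nonneg x) (-(2:ℝ))
  have := rpow_nonneg (norm_nonneg x) (-(1:ℝ))
  positivity

lemma gk_intOn_ball {C R : ℝ} (hR : 0 < R) :
    IntegrableOn (greenKernel C) (ball (0:E3) R) := by
  unfold greenKernel
  exact (((intOn_rpow_ball hR (by norm_num) (by norm_num)).add
    (intOn_rpow_ball hR (by norm_num) (by norm_num)))).const_mul C

lemma gk_integral_ball {C R : ℝ} (hC : 0 ≤ C) (hR : 0 < R) :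
    ∫ x in ball (0:E3) R, greenKernel C x
      = C * (3 * (volume (ball (0:E3) 1)).toReal * R
          + 3 * (volume (ball (0:E3) 1)).toReal * (R ^ (2:ℝ)) / 2) := by
  unfold greenKernel
  rw [MeasureTheory.integral_const_mul, integral_add (intOn_rpow_ball hR (by norm_num) (by norm_num))
      (intOn_rpow_ball hR (by norm_num) (by norm_num)),
    integral_rpow_ball hR (by norm_num) (by norm_num),
    integral_rpow_ball hR (by norm_num) (by norm_num)]
  norm_num
  left; ring

lemma sq_bound (a b : ℝ) : (4*a + 2*b)^2 ≤ 24 * (a^2 + b^2) := by nlinarith [sq_nonneg (a-b), sq_nonneg b]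

lemma inner_nonneg {C : ℝ} (hC : 0 ≤ C) (s : Set E3) (hs : MeasurableSet s) :
    0 ≤ ∫ x in s, greenKernel C x :=
  setIntegral_nonneg hs fun x _ => gk_nonneg hC x

lemma ball_vol (z : E3) {ρ : ℝ} (hρ : 0 ≤ ρ) :
    (volume (ball z ρ)).toReal = ρ^3 * (volume (ball (0:E3) 1)).toReal := by
  rw [Measure.addHaar_ball volume z hρ, finrankE3, ENNReal.toReal_mul,
    ENNReal.toReal_ofReal (by positivity)]

lemma inner_global {C r T : ℝ} (hC : 0 ≤ C) (hr : 0 < r) (hr1 : r ≤ 1) (z : E3) :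
    ∫ x in ball (0:E3) T ∩ ball z (3*r), greenKernel C x
      ≤ 99 * C * (volume (ball (0:E3) 1)).toReal * r := by
  set V := (volume (ball (0:E3) 1)).toReal with hV
  have hVnn : 0 ≤ V := ENNReal.toReal_nonneg
  have hmeas : MeasurableSet (ball (0:E3) T ∩ ball z (3*r)) :=
    measurableSet_ball.inter measurableSet_ball
  set h : E3 → ℝ := fun x => (ball (0:E3) (6*r)).indicator (greenKernel C) x
      + (ball z (3*r)).indicator (fun _ => C * r^(-(2:ℝ))) x with hh
  have h6r : (0:ℝ) < 6*r := by linarith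
  have hint : Integrable h := by
    refine Integrable.add ?_ ?_
    · exact (gk_intOn_ball h6r).integrable_indicator measurableSet_ball
    · exact (integrableOn_const measure_ball_lt_top.ne).integrable_indicator
        measurableSet_ball
  have hCr2 : 0 ≤ C * r^(-(2:ℝ)) := by positivity
  have hle : ∀ x, (ball (0:E3) T ∩ ball z (3*r)).indicator (greenKernel C) x ≤ h x := by
    intro x
    by_cases hx : x ∈ ball (0:E3) T ∩ ball z (3*r)
    · rw [indicator_of_mem hx, hh]
      dsimp only
      by_cases h6 : ‖x‖ < 6*r
      · have : x ∈ ball (0:E3) (6*r) := mem_ball_zero_iff.mpr h6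
        rw [indicator_of_mem this]
        have : (0:ℝ) ≤ (ball z (3*r)).indicator (fun _ => C * r^(-(2:ℝ))) x :=
          indicator_nonneg (fun _ _ => hCr2) x
        linarith
      · push_neg at h6
        have hxz : x ∈ ball z (3*r) := hx.2
        rw [indicator_of_mem hxz]
        have hptw : greenKernel C x ≤ C * r^(-(2:ℝ)) := by
          unfold greenKernel
          have hx0 : (0:ℝ) < ‖x‖ := lt_of_lt_of_le h6r h6
          have h1 : ‖x‖ ^ (-(2:ℝ)) ≤ (6*r) ^ (-(2:ℝ)) :=
            rpow_le_rpow_of_nonpos h6r h6 (by norm_num)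
          have h2 : ‖x‖ ^ (-(1:ℝ)) ≤ (6*r) ^ (-(1:ℝ)) :=
            rpow_le_rpow_of_nonpos h6r h6 (by norm_num)
          have e1 : (6*r) ^ (-(2:ℝ)) = 6 ^ (-(2:ℝ)) * r ^ (-(2:ℝ)) :=
            mul_rpow (by norm_num) hr.le
          have e2 : (6*r) ^ (-(1:ℝ)) = 6 ^ (-(1:ℝ)) * r ^ (-(1:ℝ)) :=
            mul_rpow (by norm_num) hr.le
          have e3 : r ^ (-(1:ℝ)) ≤ r ^ (-(2:ℝ)) :=
            rpow_le_rpow_of_exponent_ge hr hr1 (by norm_num)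
          have e4 : (6:ℝ) ^ (-(2:ℝ)) = 1/36 := by
            rw [rpow_neg (by norm_num), show ((2:ℝ) = ((2:ℕ):ℝ)) by norm_num, rpow_natCast]
            norm_num
          have e5 : (6:ℝ) ^ (-(1:ℝ)) = 1/6 := by
            rw [rpow_neg (by norm_num), rpow_one]; norm_num
          have hr2 : 0 ≤ r ^ (-(2:ℝ)) := rpow_nonneg hr.le _
          have : ‖x‖ ^ (-(2:ℝ)) + ‖x‖ ^ (-(1:ℝ)) ≤ r ^ (-(2:ℝ)) := by
            rw [e4] at e1; rw [e5] at e2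
            nlinarith
          nlinarith
        have : (0:ℝ) ≤ (ball (0:E3) (6*r)).indicator (greenKernel C) x :=
          indicator_nonneg (fun y _ => gk_nonneg hC y) x
        linarith
    · rw [indicator_of_notMem hx, hh]
      dsimp only
      have h1 : (0:ℝ) ≤ (ball (0:E3) (6*r)).indicator (greenKernel C) x :=
        indicator_nonneg (fun y _ => gk_nonneg hC y) x
      have h2 : (0:ℝ) ≤ (ball z (3*r)).indicator (fun _ => C * r^(-(2:ℝ))) x :=
        indicator_nonneg (fun _ _ => hCr2) x
      linarith
  calc ∫ x in ball (0:E3) T ∩ ball z (3*r), greenKernel C x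
      = ∫ x, (ball (0:E3) T ∩ ball z (3*r)).indicator (greenKernel C) x :=
        (integral_indicator hmeas).symm
    _ ≤ ∫ x, h x := integral_mono_of_nonneg
        (Eventually.of_forall (indicator_nonneg (fun y _ => gk_nonneg hC y)))
        hint (Eventually.of_forall hle)
    _ = (∫ x in ball (0:E3) (6*r), greenKernel C x)
          + (C * r^(-(2:ℝ))) * (volume (ball z (3*r))).toReal := by
        rw [hh, integral_add ((gk_intOn_ball h6r).integrable_indicator measurableSet_ball)
          ((integrableOn_const measure_ball_lt_top.ne).integrable_indicator
            measurableSet_ball),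
          integral_indicator measurableSet_ball, integral_indicator measurableSet_ball,
          setIntegral_const]
        rw [smul_eq_mul, measureReal_def]; ring
    _ ≤ 99 * C * V * r := by
        rw [gk_integral_ball hC h6r, ball_vol z (by linarith : (0:ℝ) ≤ 3*r)]
        have e6 : (6*r) ^ (2:ℝ) = 36 * r^2 := by
          rw [show ((2:ℝ) = ((2:ℕ):ℝ)) by norm_num, rpow_natCast]; ring
        have e7 : C * r^(-(2:ℝ)) * ((3*r)^3 * V) = 27 * C * V * (r^(-(2:ℝ)) * r^((3:ℕ):ℝ)) := by
          rw [rpow_natCast]; ring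
        have e8 : r^(-(2:ℝ)) * r^((3:ℕ):ℝ) = r := by
          rw [← rpow_add hr]; norm_num
        rw [← hV, e6, e7, e8]
        have hrr : r^2 ≤ r := by nlinarith
        have key : C*V*(r^2) ≤ C*V*r :=
          mul_le_mul_of_nonneg_left hrr (mul_nonneg hC hVnn)
        nlinarith [key]

lemma rpow_neg_two_eq {w : ℝ} (hw : 0 < w) : w ^ (-(2:ℝ)) = (w^2)⁻¹ := by
  rw [rpow_neg hw.le, show ((2:ℝ) = ((2:ℕ):ℝ)) by norm_num, rpow_natCast]

lemma rpow_neg_one_eq {w : ℝ} (hw : 0 < w) : w ^ (-(1:ℝ)) = w⁻¹ := by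
  rw [rpow_neg hw.le, rpow_one]

lemma inner_decay {C r T : ℝ} (hC : 0 ≤ C) (hr : 0 < r) (z : E3) (hz : 6*r ≤ ‖z‖) :
    ∫ x in ball (0:E3) T ∩ ball z (3*r), greenKernel C x
      ≤ 27 * r^3 * (volume (ball (0:E3) 1)).toReal
          * (C * (4 * ‖z‖^(-(2:ℝ)) + 2 * ‖z‖^(-(1:ℝ)))) := by
  set V := (volume (ball (0:E3) 1)).toReal with hV
  have hz0 : (0:ℝ) < ‖z‖ := by linarith
  set M : ℝ := C * (4 * ‖z‖^(-(2:ℝ)) + 2 * ‖z‖^(-(1:ℝ))) with hM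
  have hMnn : 0 ≤ M := by
    have := rpow_nonneg (norm_nonneg z) (-(2:ℝ))
    have := rpow_nonneg (norm_nonneg z) (-(1:ℝ))
    positivity
  have hmeas : MeasurableSet (ball (0:E3) T ∩ ball z (3*r)) :=
    measurableSet_ball.inter measurableSet_ball
  have hle : ∀ x, (ball (0:E3) T ∩ ball z (3*r)).indicator (greenKernel C) x
      ≤ (ball z (3*r)).indicator (fun _ => M) x := by
    intro x
    by_cases hx : x ∈ ball (0:E3) T ∩ ball z (3*r)
    · rw [indicator_of_mem hx, indicator_of_mem hx.2]
      have hxz : ‖x - z‖ < 3*r := by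
        have := hx.2
        rwa [mem_ball, dist_eq_norm] at this
      have hxl : ‖z‖/2 ≤ ‖x‖ := by
        have h1 : ‖z‖ ≤ ‖x‖ + ‖x - z‖ := by
          simpa [norm_sub_rev z x] using (norm_le_insert' z x)
        linarith
      have hz2 : (0:ℝ) < ‖z‖/2 := by linarith
      have h1 : ‖x‖ ^ (-(2:ℝ)) ≤ (‖z‖/2) ^ (-(2:ℝ)) :=
        rpow_le_rpow_of_nonpos hz2 hxl (by norm_num)
      have h2 : ‖x‖ ^ (-(1:ℝ)) ≤ (‖z‖/2) ^ (-(1:ℝ)) :=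
        rpow_le_rpow_of_nonpos hz2 hxl (by norm_num)
      have e1 : (‖z‖/2) ^ (-(2:ℝ)) = 4 * ‖z‖^(-(2:ℝ)) := by
        rw [rpow_neg_two_eq hz2, rpow_neg_two_eq hz0]
        field_simp
        ring
      have e2 : (‖z‖/2) ^ (-(1:ℝ)) = 2 * ‖z‖^(-(1:ℝ)) := by
        rw [rpow_neg_one_eq hz2, rpow_neg_one_eq hz0]
        field_simp
      unfold greenKernel
      rw [hM]
      have := mul_le_mul_of_nonneg_left (add_le_add (e1 ▸ h1) (e2 ▸ h2)) hC
      linarith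
    · rw [indicator_of_notMem hx]
      exact indicator_nonneg (fun _ _ => hMnn) x
  calc ∫ x in ball (0:E3) T ∩ ball z (3*r), greenKernel C x
      = ∫ x, (ball (0:E3) T ∩ ball z (3*r)).indicator (greenKernel C) x :=
        (integral_indicator hmeas).symm
    _ ≤ ∫ x, (ball z (3*r)).indicator (fun _ => M) x := integral_mono_of_nonneg
        (Eventually.of_forall (indicator_nonneg (fun y _ => gk_nonneg hC y)))
        ((integrableOn_const measure_ball_lt_top.ne).integrable_indicator
          measurableSet_ball)
        (Eventually.of_forall hle)
    _ = (volume (ball z (3*r))).toReal * M := by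
        rw [integral_indicator measurableSet_ball, setIntegral_const, smul_eq_mul, measureReal_def]
    _ = 27 * r^3 * V * M := by
        rw [ball_vol z (by linarith : (0:ℝ) ≤ 3*r)]
        ring

lemma inner_zero {C r T : ℝ} (hr : 0 < r) (z : E3) (hz : T + 3*r ≤ ‖z‖) :
    ∫ x in ball (0:E3) T ∩ ball z (3*r), greenKernel C x = 0 := by
  have : ball (0:E3) T ∩ ball z (3*r) = ∅ := by
    ext x
    simp only [mem_inter_iff, mem_ball_zero_iff, mem_ball, dist_eq_norm, mem_empty_iff_false,
      iff_false, not_and, not_lt, sub_zero]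
    intro hxT
    have h1 : ‖z‖ ≤ ‖x‖ + ‖x - z‖ := by
      simpa [norm_sub_rev z x] using (norm_le_insert' z x)
    by_contra hc
    push_neg at hc
    linarith
  rw [this]
  simp

set_option maxHeartbeats 2000000 in
/-- In `d = 3`: the convolution-square estimate for the truncated Green kernel smeared over
balls of radius `3r`:
`r^{-1-d} ∫ (∫_{|x|<T, |x-z|<3r} γ(x) dx)² dz ≤ C'(r + r^{d-1} T) ≤ 2 C' r` when `rT ≤ 1`. -/
theorem stmt8 (C : ℝ) (hC : 0 ≤ C) :
    ∃ C' : ℝ, 0 < C' ∧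
      ∀ r T : ℝ, r ∈ Set.Ioc (0:ℝ) 1 → 1 ≤ T → r * T ≤ 1 →
        (r ^ (-(1:ℝ) - 3) *
          ∫ z : EuclideanSpace ℝ (Fin 3),
            (∫ x in {x : EuclideanSpace ℝ (Fin 3) | ‖x‖ < T ∧ ‖x - z‖ < 3 * r},
              greenKernel C x) ^ 2
          ≤ C' * (r + r ^ (3 - 1) * T))
        ∧ C' * (r + r ^ (3 - 1) * T) ≤ 2 * C' * r := by
  set V := (volume (ball (0:E3) 1)).toReal with hV
  have hVpos : 0 < V := volE3
  refine ⟨3000000 * C^2 * V^3 + 1, by positivity, ?_⟩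
  rintro r T ⟨hr, hr1⟩ hT hrT
  have hr32 : r ^ (3 - 1) = r * r := by norm_num [sq]
  constructor
  · -- main estimate
    have hsets : ∀ z : E3, {x : E3 | ‖x‖ < T ∧ ‖x - z‖ < 3*r}
        = ball (0:E3) T ∩ ball z (3*r) := by
      intro z; ext x
      simp [mem_ball_zero_iff, mem_ball, dist_eq_norm]
    simp only [hsets]
    set b := max (6*r) (T + 3*r) with hb
    have h6r : (0:ℝ) < 6*r := by linarith
    have hb1 : 6*r ≤ b := le_max_left _ _
    have hb2 : T + 3*r ≤ b := le_max_right _ _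
    have hbT : b - 6*r ≤ T := by
      rcases max_cases (6*r) (T+3*r) with ⟨h, _⟩ | ⟨h, _⟩ <;> rw [hb, h] <;> linarith
    have hb0 : 0 < b := lt_of_lt_of_le h6r hb1
    set D := closedBall (0:E3) b \ ball (0:E3) (6*r) with hD
    have hDmeas : MeasurableSet D := measurableSet_closedBall.diff measurableSet_ball
    have hDfin : volume D ≠ ⊤ :=
      ((measure_mono diff_subset).trans_lt measure_closedBall_lt_top).ne
    have hDlb : ∀ z : E3, z ∈ D → 6*r ≤ ‖z‖ := by
      intro z hz
      have := hz.2
      rwa [mem_ball_zero_iff, not_lt] at this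
    -- integrability on D
    have hint4 : IntegrableOn (fun z : E3 => ‖z‖ ^ (-(4:ℝ))) D := by
      refine Measure.integrableOn_of_bounded hDfin
        ((measurable_norm.pow_const _).aestronglyMeasurable) (M := (6*r) ^ (-(4:ℝ))) ?_
      filter_upwards [ae_restrict_mem hDmeas] with z hz
      rw [Real.norm_eq_abs, abs_of_nonneg (rpow_nonneg (norm_nonneg z) _)]
      exact rpow_le_rpow_of_nonpos h6r (hDlb z hz) (by norm_num)
    have hint2 : IntegrableOn (fun z : E3 => ‖z‖ ^ (-(2:ℝ))) D := by
      refine Measure.integrableOn_of_bounded hDfin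
        ((measurable_norm.pow_const _).aestronglyMeasurable) (M := (6*r) ^ (-(2:ℝ))) ?_
      filter_upwards [ae_restrict_mem hDmeas] with z hz
      rw [Real.norm_eq_abs, abs_of_nonneg (rpow_nonneg (norm_nonneg z) _)]
      exact rpow_le_rpow_of_nonpos h6r (hDlb z hz) (by norm_num)
    set G : E3 → ℝ := fun z => (ball (0:E3) (6*r)).indicator (fun _ => (99*C*V*r)^2) z
        + D.indicator (fun z => (27*r^3*V*C)^2 * 24 * (‖z‖^(-(4:ℝ)) + ‖z‖^(-(2:ℝ)))) z with hG
    have hintG : Integrable G := by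
      refine Integrable.add ?_ ?_
      · exact (integrableOn_const measure_ball_lt_top.ne).integrable_indicator
          measurableSet_ball
      · have hin : IntegrableOn
            (fun z : E3 => (27*r^3*V*C)^2 * 24 * (‖z‖^(-(4:ℝ)) + ‖z‖^(-(2:ℝ)))) D :=
          (hint4.add hint2).const_mul _
        exact hin.integrable_indicator hDmeas
    have hMnn : (0:ℝ) ≤ (99*C*V*r)^2 := sq_nonneg _
    have hfnn : ∀ z : E3, 0 ≤ (27*r^3*V*C)^2 * 24 * (‖z‖^(-(4:ℝ)) + ‖z‖^(-(2:ℝ))) := by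
      intro z
      have := rpow_nonneg (norm_nonneg z) (-(4:ℝ))
      have := rpow_nonneg (norm_nonneg z) (-(2:ℝ))
      positivity
    -- pointwise bound
    have hFG : ∀ z : E3,
        (∫ x in ball (0:E3) T ∩ ball z (3*r), greenKernel C x) ^ 2 ≤ G z := by
      intro z
      have hInn : 0 ≤ ∫ x in ball (0:E3) T ∩ ball z (3*r), greenKernel C x :=
        inner_nonneg hC _ (measurableSet_ball.inter measurableSet_ball)
      have hind2nn : 0 ≤ D.indicator
          (fun z => (27*r^3*V*C)^2 * 24 * (‖z‖^(-(4:ℝ)) + ‖z‖^(-(2:ℝ)))) z :=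
        indicator_nonneg (fun y _ => hfnn y) z
      have hind1nn : 0 ≤ (ball (0:E3) (6*r)).indicator (fun _ => (99*C*V*r)^2) z :=
        indicator_nonneg (fun _ _ => hMnn) z
      by_cases h6 : ‖z‖ < 6*r
      · have hzb : z ∈ ball (0:E3) (6*r) := mem_ball_zero_iff.mpr h6
        simp only [hG]
        have h1 : (∫ x in ball (0:E3) T ∩ ball z (3*r), greenKernel C x) ^ 2
            ≤ (99*C*V*r)^2 := by
          apply pow_le_pow_left₀ hInn
          exact hV ▸ inner_global hC hr hr1 z
        rw [indicator_of_mem hzb]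
        linarith
      · push_neg at h6
        by_cases hzT : ‖z‖ < T + 3*r
        · have hzD : z ∈ D := by
            constructor
            · rw [mem_closedBall_zero_iff]; linarith
            · rw [mem_ball_zero_iff]; push_neg; exact h6
          simp only [hG]
          rw [indicator_of_mem hzD]
          have hz0 : (0:ℝ) < ‖z‖ := lt_of_lt_of_le h6r h6
          have hdec := inner_decay (T := T) hC hr z h6
          rw [← hV] at hdec
          have hb2' : (0:ℝ) ≤ 27*r^3*V*(C*(4*‖z‖^(-(2:ℝ)) + 2*‖z‖^(-(1:ℝ)))) := by
            have := rpow_nonneg (norm_nonneg z) (-(2:ℝ))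
            have := rpow_nonneg (norm_nonneg z) (-(1:ℝ))
            positivity
          have h1 : (∫ x in ball (0:E3) T ∩ ball z (3*r), greenKernel C x) ^ 2
              ≤ (27*r^3*V*(C*(4*‖z‖^(-(2:ℝ)) + 2*‖z‖^(-(1:ℝ)))))^2 :=
            pow_le_pow_left₀ hInn hdec 2
          have h2 : (27*r^3*V*(C*(4*‖z‖^(-(2:ℝ)) + 2*‖z‖^(-(1:ℝ)))))^2
              ≤ (27*r^3*V*C)^2 * 24 * (‖z‖^(-(4:ℝ)) + ‖z‖^(-(2:ℝ))) := by
            have e4 : ‖z‖^(-(2:ℝ)) * ‖z‖^(-(2:ℝ)) = ‖z‖^(-(4:ℝ)) := by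
              rw [← rpow_add hz0]; norm_num
            have e2 : ‖z‖^(-(1:ℝ)) * ‖z‖^(-(1:ℝ)) = ‖z‖^(-(2:ℝ)) := by
              rw [← rpow_add hz0]; norm_num
            have := sq_bound (‖z‖^(-(2:ℝ))) (‖z‖^(-(1:ℝ)))
            nlinarith [sq_nonneg (27*r^3*V*C), sq_nonneg (‖z‖^(-(2:ℝ)) - ‖z‖^(-(1:ℝ)))]
          have h3 : (0:ℝ) ≤ (ball (0:E3) (6*r)).indicator (fun _ => (99*C*V*r)^2) z :=
            hind1nn
          linarith
        · push_neg at hzT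
          rw [inner_zero hr z hzT]
          simp only [hG]
          simpa using add_nonneg hind1nn hind2nn
    -- integral bound
    have hIF : (∫ z : E3, (∫ x in ball (0:E3) T ∩ ball z (3*r), greenKernel C x) ^ 2)
        ≤ ∫ z, G z :=
      integral_mono_of_nonneg (Eventually.of_forall fun z => sq_nonneg _) hintG
        (Eventually.of_forall hFG)
    have hGval : (∫ z, G z) ≤ 3000000 * C^2 * V^3 * (r^5 + r^6 * T) := by
      have i1 : Integrable ((ball (0:E3) (6*r)).indicator (fun _ => (99*C*V*r)^2)) :=
        (integrableOn_const measure_ball_lt_top.ne).integrable_indicator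
          measurableSet_ball
      have i2 : Integrable (D.indicator
          (fun z : E3 => (27*r^3*V*C)^2 * 24 * (‖z‖^(-(4:ℝ)) + ‖z‖^(-(2:ℝ))))) := by
        have hin : IntegrableOn
            (fun z : E3 => (27*r^3*V*C)^2 * 24 * (‖z‖^(-(4:ℝ)) + ‖z‖^(-(2:ℝ)))) D :=
          (hint4.add hint2).const_mul _
        exact hin.integrable_indicator hDmeas
      have e0 : (∫ z, G z)
          = (∫ z : E3, (ball (0:E3) (6*r)).indicator (fun _ => (99*C*V*r)^2) z)
            + ∫ z : E3, D.indicator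
                (fun z : E3 => (27*r^3*V*C)^2 * 24 * (‖z‖^(-(4:ℝ)) + ‖z‖^(-(2:ℝ)))) z := by
        rw [hG]
        exact integral_add i1 i2
      have j1 : (∫ z : E3, (ball (0:E3) (6*r)).indicator (fun _ => (99*C*V*r)^2) z)
          = (6*r)^3 * V * (99*C*V*r)^2 := by
        rw [integral_indicator measurableSet_ball, setIntegral_const, smul_eq_mul, measureReal_def,
          ball_vol _ (by linarith : (0:ℝ) ≤ 6*r), ← hV]
      have j2 : (∫ z : E3, D.indicator
            (fun z : E3 => (27*r^3*V*C)^2 * 24 * (‖z‖^(-(4:ℝ)) + ‖z‖^(-(2:ℝ)))) z)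
          = (27*r^3*V*C)^2 * 24
              * ((∫ z in D, ‖z‖^(-(4:ℝ))) + ∫ z in D, ‖z‖^(-(2:ℝ))) := by
        rw [integral_indicator hDmeas, MeasureTheory.integral_const_mul,
          integral_add hint4 hint2]
      have j3 : (∫ z in D, ‖z‖^(-(4:ℝ)))
          = 3 * V * ((b ^ ((3:ℝ)+(-(4:ℝ))) - (6*r) ^ ((3:ℝ)+(-(4:ℝ))))/((3:ℝ)+(-(4:ℝ)))) := by
        rw [hD, integral_rpow_annulus h6r hb1 (by norm_num : (-(4:ℝ)) + 3 ≠ 0), ← hV]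
      have j4 : (∫ z in D, ‖z‖^(-(2:ℝ)))
          = 3 * V * ((b ^ ((3:ℝ)+(-(2:ℝ))) - (6*r) ^ ((3:ℝ)+(-(2:ℝ))))/((3:ℝ)+(-(2:ℝ)))) := by
        rw [hD, integral_rpow_annulus h6r hb1 (by norm_num : (-(2:ℝ)) + 3 ≠ 0), ← hV]
      rw [e0, j1, j2, j3, j4]
      have e1 : (3:ℝ) + (-(4:ℝ)) = -1 := by norm_num
      have e2 : (3:ℝ) + (-(2:ℝ)) = 1 := by norm_num
      rw [e1, e2, rpow_one, rpow_one, rpow_neg_one_eq hb0, rpow_neg_one_eq h6r]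
      have k1 : 3*V*((b⁻¹ - (6*r)⁻¹)/(-1)) ≤ 3*V*(6*r)⁻¹ := by
        have hbi : (0:ℝ) ≤ b⁻¹ := by positivity
        have : (b⁻¹ - (6*r)⁻¹)/(-1) = (6*r)⁻¹ - b⁻¹ := by ring
        rw [this]
        nlinarith
      have k2 : 3*V*((b - 6*r)/1) ≤ 3*V*T := by
        rw [div_one]
        nlinarith
      have hsum : 3*V*((b⁻¹ - (6*r)⁻¹)/(-1)) + 3*V*((b - 6*r)/1)
          ≤ 3*V*(6*r)⁻¹ + 3*V*T := by linarith
      have hc2 : (0:ℝ) ≤ (27*r^3*V*C)^2 * 24 := by positivity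
      have hmul := mul_le_mul_of_nonneg_left hsum hc2
      have hfinal : (6*r)^3 * V * (99*C*V*r)^2
          + (27*r^3*V*C)^2 * 24 * (3*V*(6*r)⁻¹ + 3*V*T)
          ≤ 3000000 * C^2 * V^3 * (r^5 + r^6 * T) := by
        have hexp : (27*r^3*V*C)^2 * 24 * (3*V*(6*r)⁻¹)
            = 8748 * C^2 * V^3 * r^5 := by
          field_simp
          ring
        have hexp2 : (27*r^3*V*C)^2 * 24 * (3*V*T) = 52488 * C^2*V^3*r^6*T := by ring
        have hexp3 : (6*r)^3 * V * (99*C*V*r)^2 = 2117016 * C^2*V^3*r^5 := by ring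
        have hd : (27*r^3*V*C)^2 * 24 * (3*V*(6*r)⁻¹ + 3*V*T)
            = (27*r^3*V*C)^2 * 24 * (3*V*(6*r)⁻¹) + (27*r^3*V*C)^2 * 24 * (3*V*T) := by
          ring
        rw [hd, hexp, hexp2, hexp3]
        have h5 : (0:ℝ) ≤ C^2*V^3*r^5 := by positivity
        have h6T : (0:ℝ) ≤ C^2*V^3*(r^6*T) := by positivity
        nlinarith [h5, h6T]
      calc (6*r)^3 * V * (99*C*V*r)^2
            + (27*r^3*V*C)^2 * 24 * (3*V*((b⁻¹ - (6*r)⁻¹)/(-1)) + 3*V*((b - 6*r)/1))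
          ≤ (6*r)^3 * V * (99*C*V*r)^2
            + (27*r^3*V*C)^2 * 24 * (3*V*(6*r)⁻¹ + 3*V*T) := by
            have := mul_le_mul_of_nonneg_left hsum hc2
            linarith
        _ ≤ 3000000 * C^2 * V^3 * (r^5 + r^6 * T) := hfinal
    -- combine
    have hr4 : (0:ℝ) < r ^ (-(1:ℝ) - 3) := rpow_pos_of_pos hr _
    have step := mul_le_mul_of_nonneg_left (hIF.trans hGval) hr4.le
    refine step.trans ?_
    have e5 : r ^ (-(1:ℝ) - 3) * (3000000 * C^2 * V^3 * (r^5 + r^6*T))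
        = 3000000 * C^2 * V^3 * (r + r*r*T) := by
      have h1 : r ^ (-(1:ℝ) - 3) * r^5 = r := by
        rw [show (r:ℝ)^(5:ℕ) = r ^ ((5:ℕ):ℝ) from (rpow_natCast r 5).symm, ← rpow_add hr]
        norm_num
      have h2 : r ^ (-(1:ℝ) - 3) * r^6 = r*r := by
        rw [show (r:ℝ)^(6:ℕ) = r ^ ((6:ℕ):ℝ) from (rpow_natCast r 6).symm, ← rpow_add hr]
        have he : (-(1:ℝ) - 3 + ((6:ℕ):ℝ)) = ((2:ℕ):ℝ) := by push_cast; norm_num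
        rw [he, rpow_natCast]; ring
      calc r ^ (-(1:ℝ) - 3) * (3000000 * C^2 * V^3 * (r^5 + r^6*T))
          = 3000000 * C^2 * V^3 * (r ^ (-(1:ℝ) - 3) * r^5 + (r ^ (-(1:ℝ) - 3) * r^6)*T) := by
            ring
        _ = 3000000 * C^2 * V^3 * (r + r*r*T) := by rw [h1, h2]
    rw [e5, hr32]
    have hnn : (0:ℝ) ≤ r + r*r*T := by nlinarith
    nlinarith
  · -- second inequality
    rw [hr32]
    have hC' : (0:ℝ) < 3000000 * C^2 * V^3 + 1 := by positivity
    have key : (3000000 * C^2 * V^3 + 1) * r * (r * T) ≤ (3000000 * C^2 * V^3 + 1) * r * 1 :=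
      mul_le_mul_of_nonneg_left hrT (by positivity)
    nlinarith
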